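/- Let A : ℝⁿ → ℝᵐ be a linear map, b ∈ ℝᵐ, τ ≥ 0, and let x̄ be a global minimizer of h(x) = ‖b − A x‖² over the ℓ¹ ball {x : ‖x‖₁ ≤ τ}. Set r̄ = b − A x̄. Then ⟨Aᵀ r̄, x̄⟩ = τ · ‖Aᵀ r̄‖_∞. -/

import Mathlib

/-- If `x̄` minimizes `‖b − Ax‖²` over the ℓ¹ ball of radius `τ ≥ 0`, and
`r̄ = b − A x̄`, then `⟨Aᵀ r̄, x̄⟩ = τ · ‖Aᵀ r̄‖_∞`. -/
theorem lasso_optimality_inner_product (n m : ℕ)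
    (A : EuclideanSpace ℝ (Fin n) →L[ℝ] EuclideanSpace ℝ (Fin m))
    (b : EuclideanSpace ℝ (Fin m)) (τ : ℝ) (hτ : 0 ≤ τ)
    (xb : EuclideanSpace ℝ (Fin n)) (hfeas : (∑ j, |xb j|) ≤ τ)
    (hmin : ∀ x : EuclideanSpace ℝ (Fin n),
      (∑ j, |x j|) ≤ τ → ‖b - A xb‖ ^ 2 ≤ ‖b - A x‖ ^ 2)
    (rb : EuclideanSpace ℝ (Fin m)) (hrb : rb = b - A xb) :
    (inner ℝ ((ContinuousLinearMap.adjoint A) rb) xb : ℝ) =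
      τ * ⨆ j, |(ContinuousLinearMap.adjoint A) rb j| := by
  set c : EuclideanSpace ℝ (Fin n) := (ContinuousLinearMap.adjoint A) rb with hc
  rcases Nat.eq_zero_or_pos n with hn | hn
  · subst hn
    have hin : (inner ℝ c xb : ℝ) = 0 := by
      simp [PiLp.inner_apply]
    have hsup : (⨆ j : Fin 0, |c j|) = 0 := Real.iSup_of_isEmpty _
    rw [hin, hsup, mul_zero]
  have : Nonempty (Fin n) := ⟨⟨0, hn⟩⟩
  -- Step 1: variational inequality
  have key : ∀ x : EuclideanSpace ℝ (Fin n), (∑ j, |x j|) ≤ τ →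
      (inner ℝ rb (A (x - xb)) : ℝ) ≤ 0 := by
    intro x hx
    set d : EuclideanSpace ℝ (Fin n) := x - xb with hd
    by_contra hcon
    push_neg at hcon
    set s : ℝ := (inner ℝ rb (A d) : ℝ) with hs
    have hAd : A d ≠ 0 := by
      intro h
      rw [hs, h, inner_zero_right] at hcon
      exact lt_irrefl 0 hcon
    have hq : 0 < ‖A d‖ ^ 2 := pow_pos (norm_pos_iff.mpr hAd) 2
    set q : ℝ := ‖A d‖ ^ 2 with hqdef
    set t : ℝ := min 1 (s / q) with ht
    have ht0 : 0 < t := lt_min one_pos (div_pos hcon hq)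
    have ht1 : t ≤ 1 := min_le_left _ _
    have htq : t * q ≤ s := by
      have h2 : t ≤ s / q := min_le_right _ _
      calc t * q ≤ (s / q) * q := by nlinarith
        _ = s := by field_simp
    -- feasible point
    have hfeas' : (∑ j, |(xb + t • d) j|) ≤ τ := by
      have hb : ∀ j, |(xb + t • d) j| ≤ (1 - t) * |xb j| + t * |x j| := by
        intro j
        have heq : (xb + t • d) j = (1 - t) * xb j + t * x j := by
          simp only [PiLp.add_apply, PiLp.smul_apply, smul_eq_mul, hd, PiLp.sub_apply]
          ring
        rw [heq]
        calc |(1 - t) * xb j + t * x j| ≤ |(1 - t) * xb j| + |t * x j| := abs_add_le _ _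
          _ = (1 - t) * |xb j| + t * |x j| := by
              rw [abs_mul, abs_mul, abs_of_nonneg (by linarith : (0:ℝ) ≤ 1 - t),
                abs_of_nonneg ht0.le]
      calc (∑ j, |(xb + t • d) j|) ≤ ∑ j, ((1 - t) * |xb j| + t * |x j|) :=
            Finset.sum_le_sum fun j _ => hb j
        _ = (1 - t) * (∑ j, |xb j|) + t * (∑ j, |x j|) := by
            rw [Finset.sum_add_distrib, Finset.mul_sum, Finset.mul_sum]
        _ ≤ (1 - t) * τ + t * τ := by
            have h1 : (0:ℝ) ≤ 1 - t := by linarith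
            gcongr
        _ = τ := by ring
    have hm := hmin _ hfeas'
    have hsub : b - A (xb + t • d) = rb - t • A d := by
      rw [hrb]
      simp only [map_add, map_smul]
      abel
    rw [hsub, ← hrb] at hm
    have hexpand : ‖rb - t • A d‖ ^ 2 = ‖rb‖ ^ 2 - 2 * (t * s) + t ^ 2 * q := by
      rw [norm_sub_sq_real, real_inner_smul_right, norm_smul, mul_pow, hqdef,
        Real.norm_eq_abs, sq_abs, hs]
    rw [hexpand] at hm
    nlinarith [hm, ht0, hcon, htq]
  -- Step 2: ⟨c, x⟩ ≤ ⟨c, xb⟩ for feasible x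
  have step2 : ∀ x : EuclideanSpace ℝ (Fin n), (∑ j, |x j|) ≤ τ →
      (inner ℝ c x : ℝ) ≤ (inner ℝ c xb : ℝ) := by
    intro x hx
    have hkx := key x hx
    rw [map_sub, inner_sub_right] at hkx
    have h1 : (inner ℝ c x : ℝ) = (inner ℝ rb (A x) : ℝ) := by
      rw [hc, ContinuousLinearMap.adjoint_inner_left]
    have h2 : (inner ℝ c xb : ℝ) = (inner ℝ rb (A xb) : ℝ) := by
      rw [hc, ContinuousLinearMap.adjoint_inner_left]
    linarith
  -- Step 3: the sup is attained
  obtain ⟨j₀, hj₀⟩ := Finite.exists_max (fun j => |c j|)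
  have hM : (⨆ j, |c j|) = |c j₀| :=
    le_antisymm (ciSup_le hj₀) (le_ciSup (f := fun j => |c j|) (Finite.bddAbove_range _) j₀)
  obtain ⟨sg, hsgabs, hsgmul⟩ : ∃ sg : ℝ, |sg| = 1 ∧ sg * c j₀ = |c j₀| := by
    rcases le_or_gt 0 (c j₀) with h | h
    · exact ⟨1, abs_one, by rw [one_mul, abs_of_nonneg h]⟩
    · exact ⟨-1, by norm_num, by rw [abs_of_neg h]; ring⟩
  set xs : EuclideanSpace ℝ (Fin n) := EuclideanSpace.single j₀ (τ * sg) with hxs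
  have hxsfeas : (∑ j, |xs j|) ≤ τ := by
    have heq : (∑ j, |xs j|) = |τ * sg| := by
      simp [hxs, EuclideanSpace.single_apply, apply_ite abs, Finset.sum_ite_eq']
    rw [heq, abs_mul, hsgabs, abs_of_nonneg hτ, mul_one]
  have hxsinner : (inner ℝ c xs : ℝ) = τ * |c j₀| := by
    rw [hxs, real_inner_comm, EuclideanSpace.inner_single_left]
    simp only [RCLike.conj_to_real, starRingEnd_apply, star_trivial]
    rw [mul_assoc, hsgmul]
  -- Step 4: Hölder bound
  have hupper : (inner ℝ c xb : ℝ) ≤ τ * |c j₀| := by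
    have hinsum : (inner ℝ c xb : ℝ) = ∑ j, c j * xb j := by
      simp [PiLp.inner_apply, RCLike.inner_apply, mul_comm]
    rw [hinsum]
    calc (∑ j, c j * xb j) ≤ ∑ j, |c j₀| * |xb j| := by
          apply Finset.sum_le_sum
          intro j _
          calc c j * xb j ≤ |c j * xb j| := le_abs_self _
            _ = |c j| * |xb j| := abs_mul _ _
            _ ≤ |c j₀| * |xb j| := mul_le_mul_of_nonneg_right (hj₀ j) (abs_nonneg _)
      _ = |c j₀| * ∑ j, |xb j| := by rw [Finset.mul_sum]
      _ ≤ |c j₀| * τ := mul_le_mul_of_nonneg_left hfeas (abs_nonneg _)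
      _ = τ * |c j₀| := mul_comm _ _
  have hlower : τ * |c j₀| ≤ (inner ℝ c xb : ℝ) := hxsinner ▸ step2 xs hxsfeas
  rw [hM]
  linarith
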